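/- For positive integers m, d, k, let A(m, d) denote the expected size of the k-skyband of m points in ℝ^d whose coordinates are generated by d independent, uniformly random permutations of {1, …, m}. Then for every d ≥ 2 and every m ≥ 1, A(m, d) = Σ_{g=1}^{m} A(g, d−1)/g. -/

import Mathlib

/-- In the random coordinate-permutation model, the `j`-th coordinate of the
(1-based) point `i` is `σ j ⟨i-1⟩`. -/
def coordOf {n d : ℕ} (σ : Fin d → Equiv.Perm (Fin n)) (j : Fin d) (i : ℕ) : ℕ :=
  if h : i - 1 < n then ((σ j) ⟨i - 1, h⟩ : ℕ) else 0

/-- Point `a` dominates point `b`: every coordinate of `a` is strictly larger. -/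
def Dominates {n d : ℕ} (σ : Fin d → Equiv.Perm (Fin n)) (a b : ℕ) : Prop :=
  ∀ j : Fin d, coordOf σ j b < coordOf σ j a

instance {n d : ℕ} (σ : Fin d → Equiv.Perm (Fin n)) (a b : ℕ) :
    Decidable (Dominates σ a b) :=
  inferInstanceAs (Decidable (∀ j : Fin d, coordOf σ j b < coordOf σ j a))

/-- The size of the `k`-skyband of the `m` points determined by `σ`:
the number of points dominated by fewer than `k` other points. -/
def skybandSize {m d : ℕ} (k : ℕ) (σ : Fin d → Equiv.Perm (Fin m)) : ℕ :=
  ((Finset.Icc 1 m).filter (fun i =>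
    ((Finset.Icc 1 m).filter (fun a => Dominates σ a i)).card < k)).card

/-- `A k m d`: the expected size of the `k`-skyband of `m` points in `ℝ^d` whose
coordinates are generated by `d` independent uniformly random permutations of
`{1, …, m}`. -/
noncomputable def A (k m d : ℕ) : ℝ :=
  (∑ σ : Fin d → Equiv.Perm (Fin m), (skybandSize k σ : ℝ))
    / (Fintype.card (Fin d → Equiv.Perm (Fin m)) : ℝ)

namespace SkyRec

open Finset Equiv

def domCount {n e : ℕ} (τ : Fin e → Equiv.Perm (Fin n)) (x : Fin n) : ℕ :=
  (Finset.univ.filter fun y => ∀ j, τ j x < τ j y).card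

def Nc (k : ℕ) {n : ℕ} (e : ℕ) (x : Fin n) : ℕ :=
  (Finset.univ.filter fun τ : Fin e → Equiv.Perm (Fin n) => domCount τ x < k).card

lemma domCard_eq {m d : ℕ} (σ : Fin d → Equiv.Perm (Fin m)) {i : ℕ}
    (hi : i ∈ Finset.Icc 1 m) (h : i - 1 < m) :
    ((Finset.Icc 1 m).filter fun a => Dominates σ a i).card = domCount σ ⟨i - 1, h⟩ := by
  simp only [mem_Icc] at hi
  unfold domCount
  apply Finset.card_bij (fun a ha => (⟨a - 1, by
      simp only [mem_filter, mem_Icc] at ha; omega⟩ : Fin m))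
  · intro a ha
    simp only [mem_filter, mem_Icc] at ha
    simp only [mem_filter, mem_univ, true_and]
    intro j
    have := ha.2 j
    unfold Dominates coordOf at this
    rw [dif_pos h, dif_pos (show a - 1 < m by omega)] at this
    exact this
  · intro a ha b hb hab
    simp only [mem_filter, mem_Icc] at ha hb
    have := congrArg Fin.val hab
    simp only at this
    omega
  · intro x hx
    simp only [mem_filter, mem_univ, true_and] at hx
    refine ⟨(x : ℕ) + 1, ?_, ?_⟩
    · simp only [mem_filter, mem_Icc]
      refine ⟨⟨by omega, by omega⟩, ?_⟩
      intro j
      unfold coordOf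
      rw [dif_pos h, dif_pos (show (x:ℕ)+1-1 < m by simp)]
      have := hx j
      simpa using this
    · apply Fin.ext
      simp

lemma skybandSize_eq {m d : ℕ} (k : ℕ) (σ : Fin d → Equiv.Perm (Fin m)) :
    skybandSize k σ = (Finset.univ.filter fun x : Fin m => domCount σ x < k).card := by
  unfold skybandSize
  apply Finset.card_bij (fun i hi => (⟨i - 1, by
      simp only [mem_filter, mem_Icc] at hi; omega⟩ : Fin m))
  · intro i hi
    simp only [mem_filter, mem_Icc] at hi
    simp only [mem_filter, mem_univ, true_and]
    rw [← domCard_eq σ (by simp only [mem_Icc]; omega) (by omega)]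
    exact hi.2
  · intro a ha b hb hab
    simp only [mem_filter, mem_Icc] at ha hb
    have := congrArg Fin.val hab
    simp only at this
    omega
  · intro x hx
    simp only [mem_filter, mem_univ, true_and] at hx
    have hmem : (x : ℕ) + 1 ∈ Finset.Icc 1 m := by
      simp only [mem_Icc]; omega
    refine ⟨(x : ℕ) + 1, ?_, by apply Fin.ext; simp⟩
    simp only [mem_filter]
    refine ⟨hmem, ?_⟩
    rw [domCard_eq σ hmem (by simpa using x.isLt)]
    have hxx : (⟨(x : ℕ) + 1 - 1, by simpa using x.isLt⟩ : Fin m) = x := by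
      apply Fin.ext; simp
    rw [hxx]
    exact hx

lemma sum_sky {m d : ℕ} (k : ℕ) :
    ∑ σ : Fin d → Equiv.Perm (Fin m), skybandSize k σ = ∑ x : Fin m, Nc k d x := by
  have h1 : ∀ σ : Fin d → Equiv.Perm (Fin m),
      skybandSize k σ = ∑ x : Fin m, if domCount σ x < k then 1 else 0 := by
    intro σ; rw [skybandSize_eq, Finset.card_filter]
  simp only [h1]
  rw [Finset.sum_comm]
  apply Finset.sum_congr rfl
  intro x _
  rw [Nc, Finset.card_filter]

lemma domCount_mul {n e : ℕ} (τ : Fin e → Equiv.Perm (Fin n)) (π : Equiv.Perm (Fin n))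
    (x : Fin n) : domCount (fun j => τ j * π) x = domCount τ (π x) := by
  unfold domCount
  apply Finset.card_bij (fun y _ => π y)
  · intro y hy
    simp only [mem_filter, mem_univ, true_and, Perm.mul_apply] at hy ⊢
    exact (Finset.mem_filter.1 hy).2
  · intro a _ b _ h
    exact π.injective h
  · intro y hy
    simp only [mem_filter, mem_univ, true_and] at hy
    exact ⟨π⁻¹ y, Finset.mem_filter.2 ⟨Finset.mem_univ _, fun j => by simpa [Perm.mul_apply] using hy j⟩, by simp⟩

lemma Nc_perm {n e : ℕ} (k : ℕ) (π : Equiv.Perm (Fin n)) (x : Fin n) :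
    Nc k e (π x) = Nc k e x := by
  unfold Nc
  apply Finset.card_bij' (fun τ _ => fun j => τ j * π) (fun τ _ => fun j => τ j * π⁻¹)
  · intro τ hτ
    simp only [mem_filter, mem_univ, true_and] at hτ ⊢
    rwa [domCount_mul]
  · intro τ hτ
    simp only [mem_filter, mem_univ, true_and] at hτ ⊢
    rwa [domCount_mul, show ∀ z, π⁻¹ (π z) = z from π.symm_apply_apply]
  · intro τ _; funext j; simp [mul_assoc]
  · intro τ _; funext j; simp [mul_assoc]

lemma Nc_eq {n e : ℕ} (k : ℕ) (x y : Fin n) : Nc k e x = Nc k e y := by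
  have h := Nc_perm (e := e) k (Equiv.swap y x) x
  rw [Equiv.swap_apply_right] at h; exact h.symm


variable {g n : ℕ} (S : Fin g ↪ Fin n)

lemma card_img (τ : Equiv.Perm (Fin n)) :
    (Finset.univ.image fun a : Fin g => τ (S a)).card = g := by
  rw [Finset.card_image_of_injective _
    (show Function.Injective (fun a : Fin g => τ (S a)) from
      fun a b hab => S.injective (τ.injective hab)), card_univ, Fintype.card_fin]

noncomputable def toImg (τ : Equiv.Perm (Fin n)) :
    Fin g ≃ ↥(Finset.univ.image fun a : Fin g => τ (S a)) :=
  Equiv.ofBijective (fun a => ⟨τ (S a), Finset.mem_image_of_mem _ (Finset.mem_univ a)⟩)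
    ⟨fun a b hab => S.injective (τ.injective (Subtype.ext_iff.mp hab)),
     fun x => by
      obtain ⟨a, _, ha⟩ := Finset.mem_image.1 x.2
      exact ⟨a, Subtype.ext ha⟩⟩

noncomputable def patt (τ : Equiv.Perm (Fin n)) : Equiv.Perm (Fin g) :=
  (toImg S τ).trans
    ((Finset.univ.image fun a : Fin g => τ (S a)).orderIsoOfFin (card_img S τ)).symm.toEquiv

lemma patt_lt (τ : Equiv.Perm (Fin n)) (a b : Fin g) :
    patt S τ a < patt S τ b ↔ τ (S a) < τ (S b) := by
  unfold patt
  simp only [Equiv.trans_apply]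
  rw [show ((Finset.univ.image fun a : Fin g => τ (S a)).orderIsoOfFin
      (card_img S τ)).symm.toEquiv (toImg S τ a)
    = ((Finset.univ.image fun a : Fin g => τ (S a)).orderIsoOfFin
      (card_img S τ)).symm (toImg S τ a) from rfl]
  rw [show ((Finset.univ.image fun a : Fin g => τ (S a)).orderIsoOfFin
      (card_img S τ)).symm.toEquiv (toImg S τ b)
    = ((Finset.univ.image fun a : Fin g => τ (S a)).orderIsoOfFin
      (card_img S τ)).symm (toImg S τ b) from rfl]
  rw [OrderIso.lt_iff_lt]
  exact Iff.rfl

lemma patt_unique (τ : Equiv.Perm (Fin n)) (π : Equiv.Perm (Fin g))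
    (h : ∀ a b, π a < π b ↔ τ (S a) < τ (S b)) : π = patt S τ := by
  have hcard : (Finset.univ : Finset (Fin g)).card = g := by simp
  have hmono : StrictMono (fun x => patt S τ (π⁻¹ x)) := by
    intro x y hxy
    rw [patt_lt, ← h, show ∀ z, π (π⁻¹ z) = z from π.apply_symm_apply,
      show ∀ z, π (π⁻¹ z) = z from π.apply_symm_apply]
    exact hxy
  have h1 : (fun x => patt S τ (π⁻¹ x)) = Finset.univ.orderEmbOfFin hcard :=
    Finset.orderEmbOfFin_unique hcard (fun x => Finset.mem_univ _) hmono
  have h2 : (id : Fin g → Fin g) = Finset.univ.orderEmbOfFin hcard :=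
    Finset.orderEmbOfFin_unique hcard (fun x => Finset.mem_univ _) strictMono_id
  ext a
  have := congrFun (h1.trans h2.symm) (π a)
  have h3 : patt S τ a = π a := by simpa using this
  exact congrArg Fin.val h3.symm

lemma patt_mul (τ : Equiv.Perm (Fin n)) (ρ : Equiv.Perm (Fin g)) :
    patt S (τ * ρ.viaEmbedding S) = patt S τ * ρ := by
  refine (patt_unique S _ _ ?_).symm
  intro a b
  simp only [Perm.mul_apply, Perm.viaEmbedding_apply]
  exact patt_lt S τ (ρ a) (ρ b)

noncomputable def pfiber (π : Equiv.Perm (Fin g)) : Finset (Equiv.Perm (Fin n)) :=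
  Finset.univ.filter fun τ => patt S τ = π

lemma pfiber_card (π : Equiv.Perm (Fin g)) : (pfiber S π).card = (pfiber S 1).card := by
  classical
  apply Finset.card_bij' (fun τ _ => τ * (π⁻¹).viaEmbedding S)
    (fun τ _ => τ * π.viaEmbedding S)
  · intro τ hτ
    simp only [pfiber, mem_filter, mem_univ, true_and] at hτ ⊢
    rw [patt_mul, hτ, mul_inv_cancel]
  · intro τ hτ
    simp only [pfiber, mem_filter, mem_univ, true_and] at hτ ⊢
    rw [patt_mul, hτ, one_mul]
  · intro τ _
    rw [mul_assoc, ← Perm.viaEmbeddingHom_apply, ← Perm.viaEmbeddingHom_apply, ← map_mul,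
      inv_mul_cancel, map_one, mul_one]
  · intro τ _
    rw [mul_assoc, ← Perm.viaEmbeddingHom_apply, ← Perm.viaEmbeddingHom_apply, ← map_mul,
      mul_inv_cancel, map_one, mul_one]

lemma pfiber_mul_card :
    (pfiber S 1).card * Fintype.card (Equiv.Perm (Fin g))
      = Fintype.card (Equiv.Perm (Fin n)) := by
  classical
  have h := Finset.card_eq_sum_card_fiberwise
    (s := (Finset.univ : Finset (Equiv.Perm (Fin n))))
    (t := (Finset.univ : Finset (Equiv.Perm (Fin g)))) (f := patt S)
    (fun x _ => Finset.mem_univ _)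
  rw [Finset.card_univ] at h
  rw [h]
  rw [Finset.sum_congr rfl (fun π _ =>
    show (Finset.univ.filter fun a => patt S a = π).card = (pfiber S 1).card from
      pfiber_card S π)]
  rw [Finset.sum_const, Finset.card_univ, smul_eq_mul, mul_comm]

variable {e : ℕ}

lemma multi_fiber_card (π' : Fin e → Equiv.Perm (Fin g)) :
    (Finset.univ.filter fun τ : Fin e → Equiv.Perm (Fin n) =>
      (fun j => patt S (τ j)) = π').card = (pfiber S 1).card ^ e := by
  classical
  have heq : (Finset.univ.filter fun τ : Fin e → Equiv.Perm (Fin n) =>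
      (fun j => patt S (τ j)) = π') = Fintype.piFinset (fun j => pfiber S (π' j)) := by
    ext τ
    simp [Fintype.mem_piFinset, pfiber, funext_iff]
  rw [heq, Fintype.card_piFinset]
  rw [Finset.prod_congr rfl (fun j _ => pfiber_card S (π' j))]
  simp

lemma count_pattern (k : ℕ) (Q : (Fin e → Equiv.Perm (Fin g)) → Prop) [DecidablePred Q] :
    (Finset.univ.filter fun τ : Fin e → Equiv.Perm (Fin n) =>
        Q (fun j => patt S (τ j))).card
      = (pfiber S 1).card ^ e * (Finset.univ.filter Q).card := by
  classical
  rw [Finset.card_eq_sum_card_fiberwise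
    (f := fun τ : Fin e → Equiv.Perm (Fin n) => fun j => patt S (τ j))
    (t := Finset.univ.filter Q)
    (fun τ hτ => by
      exact Finset.mem_coe.2 (Finset.mem_filter.2
        ⟨Finset.mem_univ _, (Finset.mem_filter.1 (Finset.mem_coe.1 hτ)).2⟩))]
  rw [Finset.sum_congr rfl (fun π' hπ' => ?_), Finset.sum_const, smul_eq_mul, mul_comm]
  have hQ : Q π' := (Finset.mem_filter.1 hπ').2
  have : (Finset.univ.filter fun τ : Fin e → Equiv.Perm (Fin n) =>
        Q (fun j => patt S (τ j))).filter
        (fun τ => (fun j => patt S (τ j)) = π')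
      = Finset.univ.filter fun τ : Fin e → Equiv.Perm (Fin n) =>
        (fun j => patt S (τ j)) = π' := by
    ext τ
    simp only [Finset.mem_filter, Finset.mem_univ, true_and, and_iff_right_iff_imp]
    intro h
    rw [h]; exact hQ
  rw [this, multi_fiber_card]


def Nc0 (k e g : ℕ) : ℕ := if h : 0 < g then Nc k e (⟨0, h⟩ : Fin g) else 0

lemma Nc0_eq {g : ℕ} (k e : ℕ) (x : Fin g) : Nc k e x = Nc0 k e g := by
  have hg : 0 < g := x.pos
  rw [Nc0, dif_pos hg]
  exact Nc_eq k x ⟨0, hg⟩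

lemma key_count {m : ℕ} (k e : ℕ) (he : 0 < e) (U : Finset (Fin m)) (x₀ : Fin m)
    (hx : x₀ ∈ U) :
    (Finset.univ.filter fun τ : Fin e → Equiv.Perm (Fin m) =>
        ((U.erase x₀).filter fun y => ∀ j, τ j x₀ < τ j y).card < k).card
      * Fintype.card (Equiv.Perm (Fin U.card)) ^ e
    = Fintype.card (Equiv.Perm (Fin m)) ^ e * Nc0 k e U.card := by
  classical
  set S : Fin U.card ↪ Fin m := (U.orderEmbOfFin rfl).toEmbedding with hSdef
  have hS : ∀ b, S b ∈ U := fun b => Finset.orderEmbOfFin_mem U rfl b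
  have hSsurj : ∀ y ∈ U, ∃ b, S b = y := by
    intro y hy
    have : y ∈ Set.range (U.orderEmbOfFin rfl) := by
      rw [Finset.range_orderEmbOfFin]; exact hy
    obtain ⟨b, hb⟩ := this
    exact ⟨b, hb⟩
  obtain ⟨a₀, ha₀⟩ := hSsurj x₀ hx
  have inner : ∀ τ : Fin e → Equiv.Perm (Fin m),
      ((U.erase x₀).filter fun y => ∀ j, τ j x₀ < τ j y).card
        = domCount (fun j => patt S (τ j)) a₀ := by
    intro τ
    rw [domCount]
    symm
    apply Finset.card_bij (fun b _ => S b)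
    · intro b hb
      simp only [mem_filter, mem_univ, true_and] at hb
      have hb' : ∀ j, τ j x₀ < τ j (S b) := by
        intro j
        have := (patt_lt S (τ j) a₀ b).mp (hb j)
        rwa [ha₀] at this
      have hbne : S b ≠ x₀ := by
        intro hcontra
        have := hb' ⟨0, he⟩
        rw [hcontra] at this
        exact lt_irrefl _ this
      exact Finset.mem_filter.2 ⟨Finset.mem_erase.2 ⟨hbne, hS b⟩, hb'⟩
    · intro a _ b _ hab
      exact S.injective hab
    · intro y hy
      simp only [mem_filter, mem_erase] at hy
      obtain ⟨⟨hyne, hyU⟩, hyd⟩ := hy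
      obtain ⟨b, hb⟩ := hSsurj y hyU
      refine ⟨b, ?_, hb⟩
      simp only [mem_filter, mem_univ, true_and]
      intro j
      rw [patt_lt S (τ j) a₀ b, ha₀, hb]
      exact hyd j
  have hfilter : (Finset.univ.filter fun τ : Fin e → Equiv.Perm (Fin m) =>
        ((U.erase x₀).filter fun y => ∀ j, τ j x₀ < τ j y).card < k)
      = Finset.univ.filter fun τ : Fin e → Equiv.Perm (Fin m) =>
          (fun π' : Fin e → Equiv.Perm (Fin U.card) => domCount π' a₀ < k)
            (fun j => patt S (τ j)) := by
    ext τ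
    simp only [mem_filter, mem_univ, true_and]
    rw [inner τ]
  rw [hfilter, count_pattern S 0 (fun π' => domCount π' a₀ < k)]
  have hNc : (Finset.univ.filter
      fun π' : Fin e → Equiv.Perm (Fin U.card) => domCount π' a₀ < k).card
      = Nc0 k e U.card := Nc0_eq k e a₀
  rw [hNc]
  have hrc : (pfiber S 1).card ^ e * Nc0 k e U.card
        * Fintype.card (Equiv.Perm (Fin U.card)) ^ e
      = ((pfiber S 1).card * Fintype.card (Equiv.Perm (Fin U.card))) ^ e
        * Nc0 k e U.card := by ring
  rw [hrc, pfiber_mul_card S]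

lemma cons_domCount {m e : ℕ} (s : Equiv.Perm (Fin m)) (τ : Fin e → Equiv.Perm (Fin m))
    (x₀ : Fin m) :
    domCount (Fin.cons s τ : Fin (e+1) → Equiv.Perm (Fin m)) x₀
      = (((insert x₀ (Finset.univ.filter fun y => s x₀ < s y)).erase x₀).filter
          fun y => ∀ j, τ j x₀ < τ j y).card := by
  have hx : x₀ ∉ (Finset.univ.filter fun y => s x₀ < s y) := by simp
  rw [Finset.erase_insert hx]
  unfold domCount
  apply congrArg Finset.card
  ext y
  simp only [Finset.mem_filter, Finset.mem_univ, true_and, Fin.forall_fin_succ,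
    Fin.cons_zero, Fin.cons_succ]

lemma U_card {m : ℕ} (s : Equiv.Perm (Fin m)) (x₀ : Fin m) :
    (insert x₀ (Finset.univ.filter fun y => s x₀ < s y)).card = m - (s x₀ : ℕ) := by
  have hx : x₀ ∉ (Finset.univ.filter fun y => s x₀ < s y) := by simp
  rw [Finset.card_insert_of_notMem hx]
  have hbij : (Finset.univ.filter fun y => s x₀ < s y).card = (Finset.Ioi (s x₀)).card := by
    apply Finset.card_bij (fun y _ => s y)
    · intro y hy
      simp only [Finset.mem_filter, Finset.mem_univ, true_and] at hy
      exact Finset.mem_Ioi.2 hy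
    · intro a _ b _ hab
      exact s.injective hab
    · intro z hz
      exact ⟨s⁻¹ z, by simp [Finset.mem_Ioi.1 hz], by simp⟩
  rw [hbij, Fin.card_Ioi]
  have := (s x₀).isLt
  omega

lemma Nc_split {m e : ℕ} (k : ℕ) (x₀ : Fin m) :
    Nc k (e+1) x₀ = ∑ s : Equiv.Perm (Fin m),
      (Finset.univ.filter fun τ : Fin e → Equiv.Perm (Fin m) =>
        domCount (Fin.cons s τ : Fin (e+1) → Equiv.Perm (Fin m)) x₀ < k).card := by
  classical
  rw [Nc, Finset.card_filter]
  rw [← Equiv.sum_comp (Fin.consEquiv (fun _ : Fin (e+1) => Equiv.Perm (Fin m)))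
        (fun σ : Fin (e+1) → Equiv.Perm (Fin m) => if domCount σ x₀ < k then 1 else 0)]
  rw [Fintype.sum_prod_type]
  apply Finset.sum_congr rfl
  intro s _
  rw [Finset.card_filter]
  rfl

lemma evalFiber_eq {m : ℕ} (x₀ v v' : Fin m) :
    (Finset.univ.filter fun s : Equiv.Perm (Fin m) => s x₀ = v).card
      = (Finset.univ.filter fun s : Equiv.Perm (Fin m) => s x₀ = v').card := by
  apply Finset.card_bij' (fun s _ => Equiv.swap v v' * s) (fun s _ => Equiv.swap v v' * s)
  · intro s hs
    simp only [Finset.mem_filter, Finset.mem_univ, true_and, Equiv.Perm.mul_apply] at hs ⊢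
    rw [hs, Equiv.swap_apply_left]
  · intro s hs
    simp only [Finset.mem_filter, Finset.mem_univ, true_and, Equiv.Perm.mul_apply] at hs ⊢
    rw [hs, Equiv.swap_apply_right]
  · intro s _
    rw [← mul_assoc, Equiv.swap_mul_self, one_mul]
  · intro s _
    rw [← mul_assoc, Equiv.swap_mul_self, one_mul]

lemma evalFiber_total {m : ℕ} (x₀ v : Fin m) :
    m * (Finset.univ.filter fun s : Equiv.Perm (Fin m) => s x₀ = v).card
      = Fintype.card (Equiv.Perm (Fin m)) := by
  have h : Fintype.card (Equiv.Perm (Fin m))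
      = ∑ v : Fin m, (Finset.univ.filter fun s : Equiv.Perm (Fin m) => s x₀ = v).card := by
    rw [← Finset.card_univ]
    exact Finset.card_eq_sum_card_fiberwise (fun x _ => Finset.mem_univ _)
  rw [h, Finset.sum_congr rfl (fun w _ => evalFiber_eq x₀ w v), Finset.sum_const,
    Finset.card_univ, Fintype.card_fin, smul_eq_mul]

lemma A_eq {g e : ℕ} (k : ℕ) (hg : 0 < g) :
    A k g e = (g : ℝ) * (Nc0 k e g : ℝ) / (Fintype.card (Equiv.Perm (Fin g)) : ℝ) ^ e := by
  rw [A]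
  have hcard : Fintype.card (Fin e → Equiv.Perm (Fin g))
      = Fintype.card (Equiv.Perm (Fin g)) ^ e := by
    rw [Fintype.card_fun, Fintype.card_fin]
  rw [hcard]
  have hsum : (∑ σ : Fin e → Equiv.Perm (Fin g), (skybandSize k σ : ℝ))
      = ((g * Nc0 k e g : ℕ) : ℝ) := by
    rw [← Nat.cast_sum]
    congr 1
    rw [sum_sky k, Finset.sum_congr rfl (fun x _ => Nc0_eq k e x), Finset.sum_const,
      Finset.card_univ, Fintype.card_fin, smul_eq_mul]
  rw [hsum]
  push_cast
  ring

lemma final_eq (k : ℕ) (e : ℕ) (he : 0 < e) (m : ℕ) (hm' : 0 < m) :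
    A k m (e+1) = ∑ g ∈ Finset.Icc 1 m, A k g e / (g : ℝ) := by
  classical
  set x₀ : Fin m := ⟨0, hm'⟩ with hx₀
  have hRHS : ∀ g ∈ Finset.Icc 1 m, A k g e / (g:ℝ)
      = (Nc0 k e g : ℝ) / (Fintype.card (Equiv.Perm (Fin g)) : ℝ) ^ e := by
    intro g hg
    have hg1 : 0 < g := by
      simp only [Finset.mem_Icc] at hg; omega
    rw [A_eq k hg1]
    have : (g:ℝ) ≠ 0 := by positivity
    field_simp
  rw [Finset.sum_congr rfl hRHS]
  rw [A_eq k hm' (e := e+1)]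
  have hNc0 : Nc0 k (e+1) m = Nc k (e+1) x₀ := by rw [Nc0, dif_pos hm']
  have key : ∀ s : Equiv.Perm (Fin m),
      ((Finset.univ.filter fun τ : Fin e → Equiv.Perm (Fin m) =>
        domCount (Fin.cons s τ : Fin (e+1) → Equiv.Perm (Fin m)) x₀ < k).card : ℝ)
      = (Fintype.card (Equiv.Perm (Fin m)) : ℝ)^e
          * (Nc0 k e (m - (s x₀ : ℕ)) : ℝ)
          / (Fintype.card (Equiv.Perm (Fin (m - (s x₀ : ℕ)))) : ℝ)^e := by
    intro s
    have hxU : x₀ ∈ insert x₀ (Finset.univ.filter fun y => s x₀ < s y) :=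
      Finset.mem_insert_self _ _
    have h1 := key_count k e he (insert x₀ (Finset.univ.filter fun y => s x₀ < s y)) x₀ hxU
    rw [U_card] at h1
    have hfeq : (Finset.univ.filter fun τ : Fin e → Equiv.Perm (Fin m) =>
          domCount (Fin.cons s τ : Fin (e+1) → Equiv.Perm (Fin m)) x₀ < k)
        = (Finset.univ.filter fun τ : Fin e → Equiv.Perm (Fin m) =>
          (((insert x₀ (Finset.univ.filter fun y => s x₀ < s y)).erase x₀).filter
            fun y => ∀ j, τ j x₀ < τ j y).card < k) := by
      ext τ
      simp only [Finset.mem_filter, Finset.mem_univ, true_and]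
      rw [cons_domCount]
    rw [hfeq]
    have hPg : (0:ℝ) < (Fintype.card (Equiv.Perm (Fin (m - (s x₀ : ℕ)))) : ℝ) := by
      exact_mod_cast Fintype.card_pos
    rw [eq_div_iff (by positivity)]
    exact_mod_cast h1
  have hG : ((Nc0 k (e+1) m : ℕ) : ℝ) = ∑ v : Fin m,
      ((Finset.univ.filter fun s : Equiv.Perm (Fin m) => s x₀ = v).card : ℝ)
        * ((Fintype.card (Equiv.Perm (Fin m)) : ℝ)^e * (Nc0 k e (m - (v:ℕ)) : ℝ)
            / (Fintype.card (Equiv.Perm (Fin (m - (v:ℕ)))) : ℝ)^e) := by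
    calc ((Nc0 k (e+1) m : ℕ) : ℝ)
        = ∑ s : Equiv.Perm (Fin m),
          ((Finset.univ.filter fun τ : Fin e → Equiv.Perm (Fin m) =>
            domCount (Fin.cons s τ : Fin (e+1) → Equiv.Perm (Fin m)) x₀ < k).card : ℝ) := by
          rw [hNc0, Nc_split k x₀]
          push_cast
          rfl
      _ = ∑ s : Equiv.Perm (Fin m),
          ((Fintype.card (Equiv.Perm (Fin m)) : ℝ)^e
            * (Nc0 k e (m - ((s x₀ : Fin m) : ℕ)) : ℝ)
            / (Fintype.card (Equiv.Perm (Fin (m - ((s x₀ : Fin m) : ℕ)))) : ℝ)^e) :=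
          Finset.sum_congr rfl (fun s _ => key s)
      _ = ∑ v : Fin m, ∑ s ∈ Finset.univ.filter (fun s : Equiv.Perm (Fin m) => s x₀ = v),
          ((Fintype.card (Equiv.Perm (Fin m)) : ℝ)^e
            * (Nc0 k e (m - ((s x₀ : Fin m) : ℕ)) : ℝ)
            / (Fintype.card (Equiv.Perm (Fin (m - ((s x₀ : Fin m) : ℕ)))) : ℝ)^e) :=
          (Finset.sum_fiberwise_of_maps_to (fun s _ => Finset.mem_univ _) _).symm
      _ = ∑ v : Fin m,
          ((Finset.univ.filter fun s : Equiv.Perm (Fin m) => s x₀ = v).card : ℝ)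
            * ((Fintype.card (Equiv.Perm (Fin m)) : ℝ)^e * (Nc0 k e (m - (v:ℕ)) : ℝ)
              / (Fintype.card (Equiv.Perm (Fin (m - (v:ℕ)))) : ℝ)^e) := by
          refine Finset.sum_congr rfl (fun v _ => ?_)
          rw [Finset.sum_congr rfl (fun s hs => ?_), Finset.sum_const, nsmul_eq_mul]
          rw [(Finset.mem_filter.1 hs).2]
  rw [hG]
  rw [Finset.mul_sum, Finset.sum_div]
  have hterm : ∀ v : Fin m,
      (m:ℝ) * (((Finset.univ.filter fun s : Equiv.Perm (Fin m) => s x₀ = v).card : ℝ)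
        * ((Fintype.card (Equiv.Perm (Fin m)) : ℝ)^e * (Nc0 k e (m - (v:ℕ)) : ℝ)
            / (Fintype.card (Equiv.Perm (Fin (m - (v:ℕ)))) : ℝ)^e))
        / (Fintype.card (Equiv.Perm (Fin m)) : ℝ) ^ (e+1)
      = (Nc0 k e (m - (v:ℕ)) : ℝ)
          / (Fintype.card (Equiv.Perm (Fin (m - (v:ℕ)))) : ℝ)^e := by
    intro v
    have hfib : (m:ℝ) * ((Finset.univ.filter fun s : Equiv.Perm (Fin m) => s x₀ = v).card : ℝ)
        = (Fintype.card (Equiv.Perm (Fin m)) : ℝ) := by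
      exact_mod_cast evalFiber_total x₀ v
    have hPm : (0:ℝ) < (Fintype.card (Equiv.Perm (Fin m)) : ℝ) := by
      exact_mod_cast Fintype.card_pos
    have hPv : (0:ℝ) < (Fintype.card (Equiv.Perm (Fin (m - (v:ℕ)))) : ℝ) := by
      exact_mod_cast Fintype.card_pos
    rw [show (m:ℝ) * (((Finset.univ.filter fun s : Equiv.Perm (Fin m) => s x₀ = v).card : ℝ)
        * ((Fintype.card (Equiv.Perm (Fin m)) : ℝ)^e * (Nc0 k e (m - (v:ℕ)) : ℝ)
            / (Fintype.card (Equiv.Perm (Fin (m - (v:ℕ)))) : ℝ)^e))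
      = ((m:ℝ) * ((Finset.univ.filter fun s : Equiv.Perm (Fin m) => s x₀ = v).card : ℝ))
        * ((Fintype.card (Equiv.Perm (Fin m)) : ℝ)^e * (Nc0 k e (m - (v:ℕ)) : ℝ)
            / (Fintype.card (Equiv.Perm (Fin (m - (v:ℕ)))) : ℝ)^e) from by ring]
    rw [hfib]
    field_simp
    ring
  rw [Finset.sum_congr rfl (fun v _ => hterm v)]
  -- reindex
  refine Finset.sum_bij' (fun (v : Fin m) (_ : v ∈ Finset.univ) => m - (v:ℕ))
    (fun g hg => (⟨m - g, by
      simp only [Finset.mem_Icc] at hg; omega⟩ : Fin m)) ?_ ?_ ?_ ?_ ?_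
  · intro v _
    simp only [Finset.mem_Icc]
    have := v.isLt
    omega
  · intro g _
    exact Finset.mem_univ _
  · intro v _
    apply Fin.ext
    simp only
    have := v.isLt
    omega
  · intro g hg
    simp only [Finset.mem_Icc] at hg
    simp only
    omega
  · intro v _
    rfl

end SkyRec

/-- The recurrence for the expected `k`-skyband size:
`A(m, d) = Σ_{g=1}^{m} A(g, d-1) / g` for every `d ≥ 2` and `m ≥ 1`. -/
theorem skyband_recurrence (k : ℕ) (hk : 0 < k) :
    ∀ d : ℕ, 2 ≤ d → ∀ m : ℕ, 1 ≤ m →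
      A k m d = ∑ g ∈ Finset.Icc 1 m, A k g (d - 1) / (g : ℝ) := by
  intro d hd m hm
  obtain ⟨e, rfl⟩ : ∃ e, d = e + 1 := ⟨d - 1, by omega⟩
  have he : 0 < e := by omega
  have h1 : e + 1 - 1 = e := rfl
  rw [h1]
  exact SkyRec.final_eq k e he m hm
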